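/- Let (J_R)_{R ∈ I_{n,q}} be independent, identically distributed real random variables with E[J_R] = 0, E[J_R²] = 1 and E[|J_R|^k] < ∞ for every k. Then C(n,q)^{−k/2} · Σ_{(R_1, …, R_k) ∈ I_{n,q}^k ∖ P_2(I_{n,q}^k)} |E[J_{R_1} ⋯ J_{R_k}]| is equal to 0 if k = 1 or k = 2; it is at most c_k · C(n,q)^{−1/2} if k ≥ 3 is odd; and it is at most c_k · C(n,q)^{−1} if k ≥ 4 is even, where c_k is a constant depending only on k and on the common distribution of the J_R (not on n or q). -/

import Mathlib

open MeasureTheory ProbabilityTheory BigOperators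
open scoped Classical

/-- Tuples in which every entry appears exactly twice. -/
def PairTuple {X : Type*} {k : ℕ} (R : Fin k → X) : Prop :=
  ∀ i, (Finset.univ.filter fun j => R j = R i).card = 2

/-- `C(n,q)^{-k/2} ⬝ Σ_{(R_1,…,R_k) ∉ P_2} |E[J_{R_1} ⋯ J_{R_k}]|`. -/
noncomputable def offPairSum (n q k : ℕ) {Ω : Type} [MeasurableSpace Ω]
    (P : Measure Ω) (J : {A : Finset (Fin n) // A.card = q} → Ω → ℝ) : ℝ :=
  (n.choose q : ℝ) ^ (-(k : ℝ) / 2) *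
    ∑ R ∈ Finset.univ.filter
        (fun R : Fin k → {A : Finset (Fin n) // A.card = q} => ¬ PairTuple R),
      |∫ ω, ∏ i, J (R i) ω ∂P|

noncomputable def tmult {X : Type*} {k : ℕ} (R : Fin k → X) (A : X) : ℕ :=
  (Finset.univ.filter fun i => R i = A).card

noncomputable def timg {X : Type*} {k : ℕ} (R : Fin k → X) : Finset X :=
  Finset.image R Finset.univ

lemma mem_timg {X : Type*} {k : ℕ} (R : Fin k → X) (i : Fin k) : R i ∈ timg R := by
  simp [timg]

lemma mem_timg_iff {X : Type*} {k : ℕ} {R : Fin k → X} {A : X} :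
    A ∈ timg R ↔ ∃ i, R i = A := by
  simp [timg, eq_comm]

lemma tmult_le {X : Type*} {k : ℕ} (R : Fin k → X) (A : X) : tmult R A ≤ k := by
  refine le_trans (Finset.card_filter_le _ _) (by simp)

lemma tmult_pos {X : Type*} {k : ℕ} (R : Fin k → X) (i : Fin k) : 1 ≤ tmult R (R i) :=
  Finset.card_pos.mpr ⟨i, by simp [tmult]⟩

lemma timg_card_le {X : Type*} {k : ℕ} (R : Fin k → X) : (timg R).card ≤ k :=
  (Finset.card_image_le).trans (by simp)

lemma sum_tmult {X : Type*} {k : ℕ} (R : Fin k → X) : ∑ A ∈ timg R, tmult R A = k := by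
  simp only [timg, tmult]
  rw [← Finset.card_eq_sum_card_fiberwise
    (fun i (_ : i ∈ (Finset.univ : Finset (Fin k))) =>
      Finset.mem_image_of_mem R (Finset.mem_univ i))]
  simp

lemma not_pairTuple {X : Type*} {k : ℕ} {R : Fin k → X} (h : ¬ PairTuple R) :
    ∃ i : Fin k, tmult R (R i) ≠ 2 := by
  by_contra hc
  push_neg at hc
  exact h fun i => hc i

lemma indep_integral_prod {Ω : Type*} [MeasurableSpace Ω] {P : Measure Ω} [IsProbabilityMeasure P]
    {ι : Type*} {f : ι → Ω → ℝ}
    (hind : iIndepFun f P)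
    (hmeas : ∀ i, Measurable (f i)) (hint : ∀ i, Integrable (f i) P) (s : Finset ι) :
    Integrable (fun ω => ∏ i ∈ s, f i ω) P ∧
      (∫ ω, ∏ i ∈ s, f i ω ∂P) = ∏ i ∈ s, ∫ ω, f i ω ∂P := by
  classical
  induction s using Finset.induction_on with
  | empty => simp
  | insert a s ha ih =>
    have hXY : IndepFun (∏ j ∈ s, f j) (f a) P :=
      hind.indepFun_finset_prod_of_notMem hmeas ha
    have hfun : (∏ j ∈ s, f j) = fun ω => ∏ j ∈ s, f j ω := by
      funext ω; simp
    rw [hfun] at hXY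
    have hint2 := hXY.integrable_mul ih.1 (hint a)
    have heq := hXY.integral_mul_eq_mul_integral ih.1.aestronglyMeasurable (hint a).aestronglyMeasurable
    have heqfun : (fun ω => ∏ i ∈ insert a s, f i ω)
        = (fun ω => ∏ j ∈ s, f j ω) * f a := by
      funext ω; simp [Finset.prod_insert ha, mul_comm]
    rw [heqfun]
    exact ⟨hint2, by rw [heq, ih.2, Finset.prod_insert ha, mul_comm]⟩

lemma count_small_image {S : Type*} [Fintype S] [Nonempty S] (k D : ℕ) (hD : 1 ≤ D) :
    ((Finset.univ : Finset (Fin k → S)).filter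
        fun R => (timg R).card ≤ D).card
      ≤ D ^ k * Fintype.card S ^ D := by
  show ((Finset.univ : Finset (Fin k → S)).filter
        fun R => (Finset.image R Finset.univ).card ≤ D).card
      ≤ D ^ k * Fintype.card S ^ D
  haveI : Nonempty (Fin D) := ⟨⟨0, hD⟩⟩
  have key : ∀ R ∈ (Finset.univ : Finset (Fin k → S)).filter
      (fun R => (Finset.image R Finset.univ).card ≤ D),
      ∃ p : (Fin k → Fin D) × (Fin D → S), (fun i => p.2 (p.1 i)) = R := by
    intro R hR
    rw [Finset.mem_filter] at hR
    have hd : (Finset.image R Finset.univ).card ≤ D := hR.2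
    set T := Finset.image R Finset.univ with hT
    let e := T.equivFin
    refine ⟨⟨fun i => Fin.castLE hd (e ⟨R i, by simp [hT]⟩),
      fun j => if h : (j : ℕ) < T.card then ((e.symm ⟨(j : ℕ), h⟩ : T) : S)
        else Classical.arbitrary S⟩, ?_⟩
    funext i
    simp only [Fin.coe_castLE]
    rw [dif_pos (Fin.is_lt _)]
    simp [Fin.eta]
  set A := ((Finset.univ : Finset (Fin k → S)).filter
      fun R => (Finset.image R Finset.univ).card ≤ D) with hA
  let φ : (Fin k → S) → (Fin k → Fin D) × (Fin D → S) := fun R =>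
    if h : R ∈ A then Classical.choose (key R h) else Classical.arbitrary _
  have hφ : ∀ R ∈ A, (fun i => (φ R).2 ((φ R).1 i)) = R := by
    intro R hR
    simp only [φ, dif_pos hR]
    exact Classical.choose_spec (key R hR)
  calc A.card ≤ (Finset.univ : Finset ((Fin k → Fin D) × (Fin D → S))).card := by
        apply Finset.card_le_card_of_injOn φ (fun _ _ => Finset.mem_univ _)
        intro R₁ h₁ R₂ h₂ h
        rw [← hφ R₁ h₁, ← hφ R₂ h₂, h]
    _ = D ^ k * Fintype.card S ^ D := by
        simp [Fintype.card_fun]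

lemma factor_integral {Ω : Type*} [MeasurableSpace Ω] {P : Measure Ω} [IsProbabilityMeasure P]
    {μ : Measure ℝ} (hmom : ∀ m : ℕ, Integrable (fun x => |x| ^ m) μ)
    {S : Type*} [Fintype S] {J : S → Ω → ℝ}
    (hmeas : ∀ A, Measurable (J A)) (hmap : ∀ A, Measure.map (J A) P = μ)
    (hind : iIndepFun J P)
    {k : ℕ} (R : Fin k → S) :
    ∫ ω, ∏ i, J (R i) ω ∂P
      = ∏ A ∈ timg R, ∫ x, x ^ tmult R A ∂μ := by
  show ∫ ω, ∏ i, J (R i) ω ∂P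
      = ∏ A ∈ Finset.image R Finset.univ,
          ∫ x, x ^ (Finset.univ.filter fun i => R i = A).card ∂μ
  have hxm_int : ∀ m : ℕ, Integrable (fun x => x ^ m) μ := fun m =>
    (hmom m).mono' ((measurable_id'.pow_const m).aestronglyMeasurable)
      (Filter.Eventually.of_forall fun x => by simp [abs_pow])
  have hPint : ∀ (A : S) (m : ℕ), Integrable (fun ω => (J A ω) ^ m) P := by
    intro A m
    exact (integrable_map_measure ((measurable_id'.pow_const m)).aestronglyMeasurable
      (hmeas A).aemeasurable).mp (by rw [hmap A]; exact hxm_int m)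
  have hPeq : ∀ (A : S) (m : ℕ), ∫ ω, (J A ω) ^ m ∂P = ∫ x, x ^ m ∂μ := by
    intro A m
    rw [← hmap A, integral_map (hmeas A).aemeasurable
      ((measurable_id'.pow_const m)).aestronglyMeasurable]
  set mlt : S → ℕ := fun A => (Finset.univ.filter fun i => R i = A).card with hmlt
  have hgroup : ∀ ω, ∏ i, J (R i) ω
      = ∏ A ∈ Finset.image R Finset.univ, (J A ω) ^ mlt A := by
    intro ω
    rw [← Finset.prod_fiberwise_of_maps_to
      (fun i _ => Finset.mem_image_of_mem R (Finset.mem_univ i)) (fun i => J (R i) ω)]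
    refine Finset.prod_congr rfl fun A hA => ?_
    have hconst : ∀ i ∈ Finset.univ.filter (fun i => R i = A), J (R i) ω = J A ω := by
      intro i hi; rw [(Finset.mem_filter.mp hi).2]
    rw [Finset.prod_congr rfl hconst, Finset.prod_const]
  have key := indep_integral_prod
    (hind.comp (fun A => fun x => x ^ mlt A) (fun A => measurable_id'.pow_const _))
    (fun A => (hmeas A).pow_const _) (fun A => hPint A _) (Finset.image R Finset.univ)
  calc ∫ ω, ∏ i, J (R i) ω ∂P
      = ∫ ω, ∏ A ∈ Finset.image R Finset.univ, (J A ω) ^ mlt A ∂P :=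
        integral_congr_ae (Filter.Eventually.of_forall fun ω => hgroup ω)
    _ = ∏ A ∈ Finset.image R Finset.univ, ∫ ω, (J A ω) ^ mlt A ∂P := key.2
    _ = ∏ A ∈ Finset.image R Finset.univ, ∫ x, x ^ mlt A ∂μ :=
        Finset.prod_congr rfl fun A _ => hPeq A _

theorem stmt4 (μ : Measure ℝ) [IsProbabilityMeasure μ]
    (hmean : ∫ x, x ∂μ = 0) (hvar : ∫ x, x ^ 2 ∂μ = 1)
    (hmom : ∀ k : ℕ, Integrable (fun x => |x| ^ k) μ)
    (k : ℕ) (hk : 1 ≤ k) :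
    ∃ C : ℝ, ∀ (n q : ℕ), 1 ≤ q → q ≤ n →
      ∀ (Ω : Type) (mΩ : MeasurableSpace Ω) (P : Measure Ω), IsProbabilityMeasure P →
      ∀ J : {A : Finset (Fin n) // A.card = q} → Ω → ℝ,
        (∀ R, Measurable (J R)) →
        (∀ R, Measure.map (J R) P = μ) →
        iIndepFun J P →
        (k = 1 ∨ k = 2 → offPairSum n q k P J = 0) ∧
        (Odd k → 3 ≤ k →
          offPairSum n q k P J ≤ C * (n.choose q : ℝ) ^ (-(1 : ℝ) / 2)) ∧
        (Even k → 4 ≤ k →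
          offPairSum n q k P J ≤ C * ((n.choose q : ℝ))⁻¹) := by
  classical
  set B : ℝ := 1 + ∫ x, |x| ^ k ∂μ with hBdef
  have hB1 : 1 ≤ B := by
    have h0 : 0 ≤ ∫ x, |x| ^ k ∂μ := integral_nonneg fun x => by positivity
    simp only [hBdef]; linarith
  have hB0 : (0:ℝ) ≤ B := le_trans zero_le_one hB1
  refine ⟨(k : ℝ) ^ k * B ^ k, ?_⟩
  intro n q hq hqn Ω mΩ P hP J hmeasJ hmapJ hind
  haveI := hP
  have hSne : Nonempty {A : Finset (Fin n) // A.card = q} := by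
    obtain ⟨t, -, ht⟩ := Finset.exists_subset_card_eq (s := (Finset.univ : Finset (Fin n))) (n := q)
      (by simpa using hqn)
    exact ⟨⟨t, ht⟩⟩
  haveI := hSne
  have hcardS : Fintype.card {A : Finset (Fin n) // A.card = q} = n.choose q := by
    simpa using Fintype.card_finset_len (α := Fin n) q
  have hmomB : ∀ m : ℕ, m ≤ k → |∫ x, x ^ m ∂μ| ≤ B := by
    intro m hm
    have h1 : |∫ x, x ^ m ∂μ| ≤ ∫ x, |x| ^ m ∂μ := by
      calc |∫ x, x ^ m ∂μ| ≤ ∫ x, ‖x ^ m‖ ∂μ := by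
            rw [← Real.norm_eq_abs]; exact norm_integral_le_integral_norm _
        _ = ∫ x, |x| ^ m ∂μ := by simp [abs_pow, Real.norm_eq_abs]
    have hpt : ∀ x : ℝ, |x| ^ m ≤ 1 + |x| ^ k := by
      intro x
      rcases le_or_gt (|x|) 1 with h | h
      · have h2 : |x| ^ m ≤ 1 := pow_le_one₀ (abs_nonneg x) h
        have h3 : (0:ℝ) ≤ |x| ^ k := by positivity
        linarith
      · have h2 : |x| ^ m ≤ |x| ^ k := pow_le_pow_right₀ h.le hm
        linarith
    have h2 : ∫ x, |x| ^ m ∂μ ≤ ∫ x, (1 + |x| ^ k) ∂μ :=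
      integral_mono (hmom m) ((integrable_const 1).add (hmom k)) hpt
    have h3 : ∫ x, (1 + |x| ^ k) ∂μ = B := by
      rw [integral_add (integrable_const 1) (hmom k)]
      simp [hBdef]
    linarith
  have hfact := fun R : Fin k → {A : Finset (Fin n) // A.card = q} =>
    factor_integral hmom hmeasJ hmapJ hind R
  have htermB : ∀ R : Fin k → {A : Finset (Fin n) // A.card = q},
      |∫ ω, ∏ i, J (R i) ω ∂P| ≤ B ^ k := by
    intro R
    rw [hfact R, Finset.abs_prod]
    refine le_trans (Finset.prod_le_prod (fun _ _ => abs_nonneg _)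
      (fun A _ => hmomB _ (tmult_le R A))) ?_
    rw [Finset.prod_const]
    exact pow_le_pow_right₀ hB1 (timg_card_le R)
  have hzero : ∀ R : Fin k → {A : Finset (Fin n) // A.card = q},
      (∃ i, tmult R (R i) = 1) → ∫ ω, ∏ i, J (R i) ω ∂P = 0 := by
    rintro R ⟨i, hi⟩
    rw [hfact R]
    refine Finset.prod_eq_zero (mem_timg R i) ?_
    rw [hi]
    simpa using hmean
  have hN0 : (0 : ℝ) < (n.choose q : ℝ) := by exact_mod_cast Nat.choose_pos hqn
  set D := (k - 1) / 2 with hDdef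
  have main : 3 ≤ k → offPairSum n q k P J
      ≤ (k:ℝ)^k * B^k * (n.choose q : ℝ) ^ ((D : ℝ) + (-(k:ℝ)/2)) := by
    intro hk3
    have hD1 : 1 ≤ D := by omega
    have himg : ∀ R : Fin k → {A : Finset (Fin n) // A.card = q}, ¬ PairTuple R →
        (∫ ω, ∏ i, J (R i) ω ∂P) ≠ 0 → (timg R).card ≤ D := by
      intro R hnp hne
      have h2 : ∀ A ∈ timg R, 2 ≤ tmult R A := by
        intro A hA
        obtain ⟨i, rfl⟩ := mem_timg_iff.mp hA
        have h1 := tmult_pos R i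
        by_contra hlt
        push_neg at hlt
        exact hne (hzero R ⟨i, by omega⟩)
      obtain ⟨i0, hi0⟩ := not_pairTuple hnp
      have hA0 : R i0 ∈ timg R := mem_timg R i0
      have h3 : 3 ≤ tmult R (R i0) := by
        have h2' := h2 _ hA0
        omega
      have hsumT := sum_tmult R
      have herase : ∑ A ∈ (timg R).erase (R i0), tmult R A + tmult R (R i0)
          = ∑ A ∈ timg R, tmult R A := Finset.sum_erase_add _ _ hA0
      have hlow : 2 * ((timg R).erase (R i0)).card
          ≤ ∑ A ∈ (timg R).erase (R i0), tmult R A := by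
        calc 2 * ((timg R).erase (R i0)).card
            = ∑ _A ∈ (timg R).erase (R i0), 2 := by
              rw [Finset.sum_const, smul_eq_mul, mul_comm]
          _ ≤ _ := Finset.sum_le_sum
              (fun A hA => h2 A (Finset.mem_of_mem_erase hA))
      have hcerase : ((timg R).erase (R i0)).card = (timg R).card - 1 :=
        Finset.card_erase_of_mem hA0
      have hT1 : 1 ≤ (timg R).card := Finset.card_pos.mpr ⟨R i0, hA0⟩
      omega
    set g := fun R : Fin k → {A : Finset (Fin n) // A.card = q} =>
      |∫ ω, ∏ i, J (R i) ω ∂P| with hg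
    set bad := (Finset.univ.filter
      fun R : Fin k → {A : Finset (Fin n) // A.card = q} => ¬ PairTuple R) with hbad
    have hstep1 : ∑ R ∈ bad, g R = ∑ R ∈ bad.filter (fun R => g R ≠ 0), g R :=
      (Finset.sum_filter_ne_zero bad).symm
    have hsub : bad.filter (fun R => g R ≠ 0)
        ⊆ Finset.univ.filter fun R => (timg R).card ≤ D := by
      intro R hR
      rw [Finset.mem_filter] at hR
      have hbadR := Finset.mem_filter.mp hR.1
      rw [Finset.mem_filter]
      refine ⟨Finset.mem_univ _, himg R hbadR.2 ?_⟩
      intro h0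
      exact hR.2 (by simp [hg, h0])
    have hstep2 : ∑ R ∈ bad.filter (fun R => g R ≠ 0), g R
        ≤ ∑ R ∈ Finset.univ.filter
            (fun R : Fin k → {A : Finset (Fin n) // A.card = q} =>
              (timg R).card ≤ D), g R :=
      Finset.sum_le_sum_of_subset_of_nonneg hsub (fun R _ _ => abs_nonneg _)
    have hstep3 : ∑ R ∈ Finset.univ.filter
          (fun R : Fin k → {A : Finset (Fin n) // A.card = q} =>
            (timg R).card ≤ D), g R
        ≤ ((Finset.univ.filter
            (fun R : Fin k → {A : Finset (Fin n) // A.card = q} =>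
              (timg R).card ≤ D)).card : ℕ) • (B ^ k) :=
      Finset.sum_le_card_nsmul _ _ _ (fun R _ => htermB R)
    have hcount := count_small_image (S := {A : Finset (Fin n) // A.card = q}) k D hD1
    rw [hcardS] at hcount
    have hSig : ∑ R ∈ bad, g R ≤ ((k:ℝ)^k * B^k) * ((n.choose q : ℝ) ^ (D : ℕ)) := by
      have hc1 : (((Finset.univ.filter
          (fun R : Fin k → {A : Finset (Fin n) // A.card = q} =>
            (timg R).card ≤ D)).card : ℝ))
          ≤ (D:ℝ)^k * (n.choose q : ℝ)^(D:ℕ) := by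
        exact_mod_cast hcount
      have hDk : (D:ℝ)^k ≤ (k:ℝ)^k := by
        apply pow_le_pow_left₀ (by positivity)
        exact_mod_cast Nat.le_of_lt (by omega : D < k)
      calc ∑ R ∈ bad, g R
          ≤ ((Finset.univ.filter
            (fun R : Fin k → {A : Finset (Fin n) // A.card = q} =>
              (timg R).card ≤ D)).card : ℝ) * B ^ k := by
            rw [hstep1]
            refine (hstep2.trans hstep3).trans ?_
            rw [nsmul_eq_mul]
        _ ≤ ((D:ℝ)^k * (n.choose q : ℝ)^(D:ℕ)) * B^k := by
            apply mul_le_mul_of_nonneg_right hc1 (by positivity)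
        _ ≤ ((k:ℝ)^k * (n.choose q : ℝ)^(D:ℕ)) * B^k := by
            have h4 := mul_le_mul_of_nonneg_right hDk
              (le_of_lt (by positivity : (0:ℝ) < (n.choose q : ℝ)^(D:ℕ)))
            apply mul_le_mul_of_nonneg_right h4 (by positivity)
        _ = ((k:ℝ)^k * B^k) * ((n.choose q : ℝ) ^ (D : ℕ)) := by ring
    have hrpow : (n.choose q : ℝ) ^ (-(k:ℝ)/2) * (n.choose q : ℝ) ^ (D : ℕ)
        = (n.choose q : ℝ) ^ ((D : ℝ) + (-(k:ℝ)/2)) := by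
      rw [← Real.rpow_natCast (n.choose q : ℝ) D, ← Real.rpow_add hN0, add_comm]
    calc offPairSum n q k P J
        = (n.choose q : ℝ) ^ (-(k:ℝ)/2) * ∑ R ∈ bad, g R := rfl
      _ ≤ (n.choose q : ℝ) ^ (-(k:ℝ)/2)
          * (((k:ℝ)^k * B^k) * ((n.choose q : ℝ) ^ (D : ℕ))) := by
          apply mul_le_mul_of_nonneg_left hSig (Real.rpow_nonneg hN0.le _)
      _ = (k:ℝ)^k * B^k
          * ((n.choose q : ℝ) ^ (-(k:ℝ)/2) * (n.choose q : ℝ) ^ (D : ℕ)) := by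
          ring
      _ = (k:ℝ)^k * B^k * (n.choose q : ℝ) ^ ((D : ℝ) + (-(k:ℝ)/2)) := by rw [hrpow]
  refine ⟨?_, ?_, ?_⟩
  · intro hk12
    have hsum0 : ∑ R ∈ (Finset.univ.filter
        (fun R : Fin k → {A : Finset (Fin n) // A.card = q} => ¬ PairTuple R)),
        |∫ ω, ∏ i, J (R i) ω ∂P| = 0 := by
      refine Finset.sum_eq_zero fun R hR => ?_
      rw [Finset.mem_filter] at hR
      obtain ⟨i, hi⟩ := not_pairTuple hR.2
      have h1 := tmult_pos R i
      have h2 := tmult_le R (R i)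
      have h3 : tmult R (R i) = 1 := by
        rcases hk12 with h | h <;> omega
      rw [hzero R ⟨i, h3⟩, abs_zero]
    rw [offPairSum, hsum0, mul_zero]
  · intro hodd hk3
    have hkD : (k : ℝ) = 2 * (D : ℝ) + 1 := by
      have h5 : k = 2 * D + 1 := by
        have := Nat.odd_iff.mp hodd
        omega
      exact_mod_cast h5
    have hexp : (D : ℝ) + (-(k:ℝ)/2) = -(1:ℝ)/2 := by
      rw [hkD]; ring
    have h6 := main hk3
    rwa [hexp] at h6
  · intro heven hk4
    have hkD : (k : ℝ) = 2 * (D : ℝ) + 2 := by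
      have h5 : k = 2 * D + 2 := by
        have := Nat.even_iff.mp heven
        omega
      exact_mod_cast h5
    have hexp : (D : ℝ) + (-(k:ℝ)/2) = -(1:ℝ) := by
      rw [hkD]; ring
    have hmain := main (by omega)
    rw [hexp] at hmain
    rwa [Real.rpow_neg hN0.le, Real.rpow_one] at hmain
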